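/- Let η = (K1, K2, K3, K4, κ3, κ6, κ9, κ12) be a tuple of positive real parameters with a(η) > 0 and b(η) < 0. If −b(η) ≤ 4·(K1·K4·κ6·κ9·a(η))^{1/2} + 2·(K2·K3·κ3·κ12·a(η))^{1/2} + 3·(K1·K2·K3·K4·κ3·κ6^2·κ9^2·κ12)^{1/3}·(K2^{−1}·(K2·K4)^{1/3} + K3^{−1}·(K1·K3)^{1/3}), then p_{η,H}(x1,x3) ≥ 0 for all x1 > 0, x3 > 0. -/
import Mathlib

set_option maxHeartbeats 1000000

lemma rpow_half_sq {x : ℝ} (hx : 0 ≤ x) : (x ^ ((1:ℝ)/2)) ^ 2 = x := by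
  rw [← Real.rpow_natCast (x ^ ((1:ℝ)/2)) 2, ← Real.rpow_mul hx]
  norm_num

lemma rpow_third_cube {x : ℝ} (hx : 0 ≤ x) : (x ^ ((1:ℝ)/3)) ^ 3 = x := by
  rw [← Real.rpow_natCast (x ^ ((1:ℝ)/3)) 3, ← Real.rpow_mul hx]
  norm_num

lemma amgm2 {X Y M : ℝ} (hX : 0 ≤ X) (hY : 0 ≤ Y)
    (h : M ^ 2 = X * Y) : 2 * M ≤ X + Y := by
  nlinarith [sq_nonneg (X - Y), sq_nonneg (X + Y)]

lemma amgm3 {X Y Z M : ℝ} (hX : 0 ≤ X) (hY : 0 ≤ Y) (hZ : 0 ≤ Z) (hM : 0 ≤ M)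
    (h : M ^ 3 = X * Y * Z) : 3 * M ≤ X + Y + Z := by
  have hS : 0 ≤ X + Y + Z := by linarith
  have hcube : (3 * M) ^ 3 ≤ (X + Y + Z) ^ 3 := by
    nlinarith [mul_nonneg hX (sq_nonneg (Y - Z)), mul_nonneg hY (sq_nonneg (X - Z)),
      mul_nonneg hZ (sq_nonneg (X - Y)), mul_nonneg (mul_nonneg hX hY) hZ]
  exact le_of_pow_le_pow_left₀ (by norm_num) hS hcube

/-- The bivariate polynomial `p_{η,H}` supported on the hexagonal face `H`. -/
def pEtaH (K1 K2 K3 K4 κ3 κ6 κ9 κ12 x1 x3 : ℝ) : ℝ :=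
  K2 * κ3 * (κ3 * κ12 - κ6 * κ9) *
      (K2 * K4 * κ3 * κ9 * x1 ^ 4 * x3 ^ 2 + K1 * K3 * κ6 * κ12 * x1 ^ 2 * x3 ^ 2
        + K2 * K3 * κ3 * κ12 * x1 ^ 3 * x3 ^ 2)
    + K1 * K2 * K3 * κ3 * κ6 * κ12 * ((K2 + K3) * κ3 * κ12 - (K1 + K4) * κ6 * κ9)
        * x1 ^ 2 * x3
    + K1 * κ6 *
        (K2 ^ 2 * K4 * κ3 ^ 2 * κ9 ^ 2 * x1 ^ 4 * x3
          + 2 * K2 * K3 * K4 * κ3 ^ 2 * κ9 * κ12 * x1 ^ 3 * x3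
          + K1 * K2 * K3 * K4 * κ3 * κ6 * κ9 * κ12 * x1 ^ 2
          + 2 * K1 * K2 * K3 * κ3 * κ6 * κ12 ^ 2 * x1 * x3
          + K1 * K2 * K3 ^ 2 * κ3 * κ6 * κ12 ^ 2 * x1
          + K1 * K3 ^ 2 * κ6 ^ 2 * κ12 ^ 2 * x3
          + K1 ^ 2 * K3 ^ 2 * κ6 ^ 2 * κ12 ^ 2)

/-- Sufficient condition for nonnegativity of `p_{η,H}` on the positive
orthant coming from the pure cover. -/
theorem pEtaH_nonneg_of_cover15
    (K1 K2 K3 K4 κ3 κ6 κ9 κ12 : ℝ)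
    (hK1 : 0 < K1) (hK2 : 0 < K2) (hK3 : 0 < K3) (hK4 : 0 < K4)
    (hκ3 : 0 < κ3) (hκ6 : 0 < κ6) (hκ9 : 0 < κ9) (hκ12 : 0 < κ12)
    (ha : 0 < κ3 * κ12 - κ6 * κ9)
    (hb : (K2 + K3) * κ3 * κ12 - (K1 + K4) * κ6 * κ9 < 0)
    (hcond : -((K2 + K3) * κ3 * κ12 - (K1 + K4) * κ6 * κ9) ≤
      4 * (K1 * K4 * κ6 * κ9 * (κ3 * κ12 - κ6 * κ9)) ^ ((1 : ℝ) / 2)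
        + 2 * (K2 * K3 * κ3 * κ12 * (κ3 * κ12 - κ6 * κ9)) ^ ((1 : ℝ) / 2)
        + 3 * (K1 * K2 * K3 * K4 * κ3 * κ6 ^ 2 * κ9 ^ 2 * κ12) ^ ((1 : ℝ) / 3)
            * (K2⁻¹ * (K2 * K4) ^ ((1 : ℝ) / 3) + K3⁻¹ * (K1 * K3) ^ ((1 : ℝ) / 3))) :
    ∀ x1 x3 : ℝ, 0 < x1 → 0 < x3 → 0 ≤ pEtaH K1 K2 K3 K4 κ3 κ6 κ9 κ12 x1 x3 := by
  intro x1 x3 hx1 hx3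
  set r : ℝ := (K1 * K4 * κ6 * κ9 * (κ3 * κ12 - κ6 * κ9)) ^ ((1 : ℝ) / 2) with hrdef
  set s : ℝ := (K2 * K3 * κ3 * κ12 * (κ3 * κ12 - κ6 * κ9)) ^ ((1 : ℝ) / 2) with hsdef
  set t : ℝ := (K1 * K2 * K3 * K4 * κ3 * κ6 ^ 2 * κ9 ^ 2 * κ12) ^ ((1 : ℝ) / 3) with htdef
  set u : ℝ := (K2 * K4) ^ ((1 : ℝ) / 3) with hudef
  set v : ℝ := (K1 * K3) ^ ((1 : ℝ) / 3) with hvdef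
  have hr2 : r ^ 2 = K1 * K4 * κ6 * κ9 * (κ3 * κ12 - κ6 * κ9) :=
    rpow_half_sq (by positivity)
  have hs2 : s ^ 2 = K2 * K3 * κ3 * κ12 * (κ3 * κ12 - κ6 * κ9) :=
    rpow_half_sq (by positivity)
  have ht3 : t ^ 3 = K1 * K2 * K3 * K4 * κ3 * κ6 ^ 2 * κ9 ^ 2 * κ12 :=
    rpow_third_cube (by positivity)
  have hu3 : u ^ 3 = K2 * K4 := rpow_third_cube (by positivity)
  have hv3 : v ^ 3 = K1 * K3 := rpow_third_cube (by positivity)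
  have hrpos : 0 ≤ r := Real.rpow_nonneg (by positivity) _
  have hspos : 0 ≤ s := Real.rpow_nonneg (by positivity) _
  have htpos : 0 ≤ t := Real.rpow_nonneg (by positivity) _
  have hupos : 0 ≤ u := Real.rpow_nonneg (by positivity) _
  have hvpos : 0 ≤ v := Real.rpow_nonneg (by positivity) _
  -- AM-GM inequalities covering the negative monomial
  have h1 : 2 * (K1 * K2 * K3 * κ3 * κ6 * κ12 * r * x1 ^ 2 * x3) ≤
      K2 ^ 2 * K4 * κ3 ^ 2 * κ9 * (κ3 * κ12 - κ6 * κ9) * x1 ^ 4 * x3 ^ 2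
        + K1 ^ 3 * K3 ^ 2 * κ6 ^ 3 * κ12 ^ 2 := by
    refine amgm2 (by positivity) (by positivity) ?_
    linear_combination (K1 * K2 * K3 * κ3 * κ6 * κ12 * x1 ^ 2 * x3) ^ 2 * hr2
  have h2 : 2 * (K1 * K2 * K3 * κ3 * κ6 * κ12 * r * x1 ^ 2 * x3) ≤
      K1 * K2 * K3 * κ3 * κ6 * κ12 * (κ3 * κ12 - κ6 * κ9) * x1 ^ 2 * x3 ^ 2
        + K1 ^ 2 * K2 * K3 * K4 * κ3 * κ6 ^ 2 * κ9 * κ12 * x1 ^ 2 := by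
    refine amgm2 (by positivity) (by positivity) ?_
    linear_combination (K1 * K2 * K3 * κ3 * κ6 * κ12 * x1 ^ 2 * x3) ^ 2 * hr2
  have h3 : 2 * (K1 * K2 * K3 * κ3 * κ6 * κ12 * s * x1 ^ 2 * x3) ≤
      K2 ^ 2 * K3 * κ3 ^ 2 * κ12 * (κ3 * κ12 - κ6 * κ9) * x1 ^ 3 * x3 ^ 2
        + K1 ^ 2 * K2 * K3 ^ 2 * κ3 * κ6 ^ 2 * κ12 ^ 2 * x1 := by
    refine amgm2 (by positivity) (by positivity) ?_
    linear_combination (K1 * K2 * K3 * κ3 * κ6 * κ12 * x1 ^ 2 * x3) ^ 2 * hs2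
  have h4 : 3 * (K1 * K3 * κ3 * κ6 * κ12 * t * u * x1 ^ 2 * x3) ≤
      K1 * K2 * K3 * K4 * κ3 ^ 2 * κ6 * κ9 * κ12 * x1 ^ 3 * x3
        + K1 * K2 * K3 * K4 * κ3 ^ 2 * κ6 * κ9 * κ12 * x1 ^ 3 * x3
        + K1 ^ 2 * K3 ^ 2 * κ6 ^ 3 * κ12 ^ 2 * x3 := by
    refine amgm3 (by positivity) (by positivity) (by positivity) (by positivity) ?_
    linear_combination (K1 * K3 * κ3 * κ6 * κ12 * x1 ^ 2 * x3) ^ 3 * u ^ 3 * ht3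
      + (K1 * K3 * κ3 * κ6 * κ12 * x1 ^ 2 * x3) ^ 3
          * (K1 * K2 * K3 * K4 * κ3 * κ6 ^ 2 * κ9 ^ 2 * κ12) * hu3
  have h5 : 3 * (K1 * K2 * κ3 * κ6 * κ12 * t * v * x1 ^ 2 * x3) ≤
      K1 * K2 ^ 2 * K4 * κ3 ^ 2 * κ6 * κ9 ^ 2 * x1 ^ 4 * x3
        + K1 ^ 2 * K2 * K3 * κ3 * κ6 ^ 2 * κ12 ^ 2 * x1 * x3
        + K1 ^ 2 * K2 * K3 * κ3 * κ6 ^ 2 * κ12 ^ 2 * x1 * x3 := by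
    refine amgm3 (by positivity) (by positivity) (by positivity) (by positivity) ?_
    linear_combination (K1 * K2 * κ3 * κ6 * κ12 * x1 ^ 2 * x3) ^ 3 * v ^ 3 * ht3
      + (K1 * K2 * κ3 * κ6 * κ12 * x1 ^ 2 * x3) ^ 3
          * (K1 * K2 * K3 * K4 * κ3 * κ6 ^ 2 * κ9 ^ 2 * κ12) * hv3
  -- clear the inverses in the hypothesis
  have hcond2 : -((K2 + K3) * κ3 * κ12 - (K1 + K4) * κ6 * κ9) * (K2 * K3) ≤
      (4 * r + 2 * s) * (K2 * K3) + 3 * t * u * K3 + 3 * t * v * K2 := by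
    have h := mul_le_mul_of_nonneg_right hcond (le_of_lt (mul_pos hK2 hK3))
    have e : (4 * r + 2 * s + 3 * t * (K2⁻¹ * u + K3⁻¹ * v)) * (K2 * K3) =
        (4 * r + 2 * s) * (K2 * K3) + 3 * t * u * K3 + 3 * t * v * K2 := by
      field_simp
      ring
    linarith [e ▸ h]
  have hD : (0:ℝ) ≤ K1 * K2 * K3 * κ3 * κ6 * κ12 * x1 ^ 2 * x3 := by positivity
  have key := mul_le_mul_of_nonneg_right hcond2 hD
  have h23 : (0:ℝ) < K2 * K3 := mul_pos hK2 hK3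
  have s1 := mul_le_mul_of_nonneg_right h1 h23.le
  have s2 := mul_le_mul_of_nonneg_right h2 h23.le
  have s3 := mul_le_mul_of_nonneg_right h3 h23.le
  have s4 := mul_le_mul_of_nonneg_right h4 h23.le
  have s5 := mul_le_mul_of_nonneg_right h5 h23.le
  have key2 : -((K2 + K3) * κ3 * κ12 - (K1 + K4) * κ6 * κ9) * (K2 * K3)
        * (K1 * K2 * K3 * κ3 * κ6 * κ12 * x1 ^ 2 * x3) ≤
      2 * (K1 * K2 * K3 * κ3 * κ6 * κ12 * r * x1 ^ 2 * x3) * (K2 * K3)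
        + 2 * (K1 * K2 * K3 * κ3 * κ6 * κ12 * r * x1 ^ 2 * x3) * (K2 * K3)
        + 2 * (K1 * K2 * K3 * κ3 * κ6 * κ12 * s * x1 ^ 2 * x3) * (K2 * K3)
        + 3 * (K1 * K3 * κ3 * κ6 * κ12 * t * u * x1 ^ 2 * x3) * (K2 * K3)
        + 3 * (K1 * K2 * κ3 * κ6 * κ12 * t * v * x1 ^ 2 * x3) * (K2 * K3) := by
    calc -((K2 + K3) * κ3 * κ12 - (K1 + K4) * κ6 * κ9) * (K2 * K3)
          * (K1 * K2 * K3 * κ3 * κ6 * κ12 * x1 ^ 2 * x3)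
        ≤ ((4 * r + 2 * s) * (K2 * K3) + 3 * t * u * K3 + 3 * t * v * K2)
            * (K1 * K2 * K3 * κ3 * κ6 * κ12 * x1 ^ 2 * x3) := key
      _ = _ := by ring
  have htotal := le_trans key2
    (add_le_add (add_le_add (add_le_add (add_le_add s1 s2) s3) s4) s5)
  have identity : pEtaH K1 K2 K3 K4 κ3 κ6 κ9 κ12 x1 x3 * (K2 * K3) =
      ((K2 + K3) * κ3 * κ12 - (K1 + K4) * κ6 * κ9) * (K2 * K3)
          * (K1 * K2 * K3 * κ3 * κ6 * κ12 * x1 ^ 2 * x3)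
        + ((K2 ^ 2 * K4 * κ3 ^ 2 * κ9 * (κ3 * κ12 - κ6 * κ9) * x1 ^ 4 * x3 ^ 2
              + K1 ^ 3 * K3 ^ 2 * κ6 ^ 3 * κ12 ^ 2) * (K2 * K3)
            + (K1 * K2 * K3 * κ3 * κ6 * κ12 * (κ3 * κ12 - κ6 * κ9) * x1 ^ 2 * x3 ^ 2
              + K1 ^ 2 * K2 * K3 * K4 * κ3 * κ6 ^ 2 * κ9 * κ12 * x1 ^ 2) * (K2 * K3)
            + (K2 ^ 2 * K3 * κ3 ^ 2 * κ12 * (κ3 * κ12 - κ6 * κ9) * x1 ^ 3 * x3 ^ 2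
              + K1 ^ 2 * K2 * K3 ^ 2 * κ3 * κ6 ^ 2 * κ12 ^ 2 * x1) * (K2 * K3)
            + (K1 * K2 * K3 * K4 * κ3 ^ 2 * κ6 * κ9 * κ12 * x1 ^ 3 * x3
              + K1 * K2 * K3 * K4 * κ3 ^ 2 * κ6 * κ9 * κ12 * x1 ^ 3 * x3
              + K1 ^ 2 * K3 ^ 2 * κ6 ^ 3 * κ12 ^ 2 * x3) * (K2 * K3)
            + (K1 * K2 ^ 2 * K4 * κ3 ^ 2 * κ6 * κ9 ^ 2 * x1 ^ 4 * x3
              + K1 ^ 2 * K2 * K3 * κ3 * κ6 ^ 2 * κ12 ^ 2 * x1 * x3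
              + K1 ^ 2 * K2 * K3 * κ3 * κ6 ^ 2 * κ12 ^ 2 * x1 * x3) * (K2 * K3)) := by
    unfold pEtaH
    ring
  have hmul : 0 ≤ pEtaH K1 K2 K3 K4 κ3 κ6 κ9 κ12 x1 x3 * (K2 * K3) := by
    rw [identity]
    linarith [htotal]
  exact (mul_nonneg_iff_of_pos_right h23).mp hmul
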